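/- Let V be a nonzero finite-dimensional commutative real algebra with positive definite associative symmetric bilinear form and nonzero multiplication. Let x be a global maximum point of ⟨x,x²⟩ on the unit sphere and set c = x/⟨x²,x⟩ (a nonzero idempotent). Then for all y with ⟨y,c⟩ = 0, one has ⟨cy, y⟩ ≤ (1/2)⟨y,y⟩; i.e., L_c ≤ 1/2 on the orthogonal complement of c. -/

import Mathlib

private lemma aux_le_zero {a K : ℝ}
    (h : ∀ t : ℝ, 0 < t → t ≤ 1 → a ≤ t * K) : a ≤ 0 := by
  by_contra hc
  push_neg at hc
  have hK : 0 < K := by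
    have := h 1 one_pos le_rfl
    nlinarith
  have ht : 0 < min 1 (a / (2 * K)) := lt_min one_pos (by positivity)
  have h1 := h _ ht (min_le_left _ _)
  have h2 : min 1 (a / (2 * K)) * K ≤ (a / (2 * K)) * K :=
    mul_le_mul_of_nonneg_right (min_le_right _ _) hK.le
  have h3 : (a / (2 * K)) * K = a / 2 := by field_simp
  linarith

private lemma sqrt_cube_le {s : ℝ} (hs : 0 ≤ s) :
    Real.sqrt (1 + s) ^ 3 ≤ 1 + (3/2) * s + (3/8) * s ^ 2 := by
  set q := Real.sqrt (1 + s) with hqdef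
  have hq2 : q ^ 2 = 1 + s := Real.sq_sqrt (by linarith)
  have hq1 : 1 ≤ q := by
    rw [show (1:ℝ) = Real.sqrt 1 by simp, hqdef]
    exact Real.sqrt_le_sqrt (by linarith)
  have key : 0 ≤ (q - 1) ^ 3 * (3 * q + 1) :=
    mul_nonneg (pow_nonneg (by linarith) 3) (by linarith)
  nlinarith [key, hq2, hq1]

set_option maxHeartbeats 1000000 in
theorem stmt_7 {V : Type*} [AddCommGroup V] [Module ℝ V] [FiniteDimensional ℝ V]
    [Nontrivial V]
    (mul : V →ₗ[ℝ] V →ₗ[ℝ] V) (hcomm : ∀ x y, mul x y = mul y x)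
    (B : V →ₗ[ℝ] V →ₗ[ℝ] ℝ) (hsymm : ∀ x y, B x y = B y x)
    (hassoc : ∀ x y z, B (mul x y) z = B x (mul y z))
    (hpos : ∀ x, x ≠ 0 → 0 < B x x)
    (hmul : ¬ ∀ x y, mul x y = 0)
    (x : V) (hx : B x x = 1)
    (hmax : ∀ y, B y y = 1 → B y (mul y y) ≤ B x (mul x x))
    (c : V) (hc : c = (B (mul x x) x)⁻¹ • x) :
    mul c c = c ∧ c ≠ 0 ∧
      ∀ y, B y c = 0 → B (mul c y) y ≤ (1 / 2 : ℝ) * B y y := by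
  push_neg at hmul
  obtain ⟨u₀, v₀, huv⟩ := hmul
  have nz : ∀ v : V, B v v = 0 → v = 0 := by
    intro v hv
    by_contra h
    exact absurd hv (hpos v h).ne'
  have assoc' : ∀ a b c : V, B a (mul b c) = B b (mul a c) := by
    intro a b c
    rw [hsymm a (mul b c), hassoc b c a, hcomm c a]
  obtain ⟨lam, hlam⟩ : ∃ l : ℝ, l = B (mul x x) x := ⟨_, rfl⟩
  rw [← hlam] at hc
  have hlam' : B x (mul x x) = lam := by rw [hsymm]; exact hlam.symm
  -- scaling inequality
  have scale : ∀ v : V, v ≠ 0 →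
      B v (mul v v) ≤ lam * Real.sqrt (B v v) ^ 3 := by
    intro v hv
    have hBv : 0 < B v v := hpos v hv
    set r := Real.sqrt (B v v) with hr
    have hr0 : 0 < r := Real.sqrt_pos.2 hBv
    have hr2 : r ^ 2 = B v v := Real.sq_sqrt hBv.le
    have hu : B (r⁻¹ • v) (r⁻¹ • v) = 1 := by
      simp only [map_smul, LinearMap.smul_apply, smul_eq_mul]
      rw [← hr2]; field_simp
    have h1 := hmax (r⁻¹ • v) hu
    rw [hlam'] at h1
    simp only [map_smul, LinearMap.smul_apply, smul_eq_mul] at h1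
    have h2 := mul_le_mul_of_nonneg_left h1 (pow_pos hr0 3).le
    calc B v (mul v v) = r ^ 3 * (r⁻¹ * (r⁻¹ * (r⁻¹ * B v (mul v v)))) := by
          field_simp
      _ ≤ r ^ 3 * lam := h2
      _ = lam * r ^ 3 := by ring
  -- positivity of lam
  have hlam_pos : 0 < lam := by
    rcases lt_or_ge 0 lam with h | h
    · exact h
    · exfalso
      have hz : ∀ z : V, B z (mul z z) = 0 := by
        intro z
        rcases eq_or_ne z 0 with rfl | hz0
        · simp
        · have h1 := scale z hz0
          have h2 := scale (-z) (neg_ne_zero.2 hz0)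
          simp only [map_neg, LinearMap.neg_apply, neg_neg, neg_mul, mul_neg] at h2
          have hs : 0 ≤ Real.sqrt (B z z) ^ 3 := pow_nonneg (Real.sqrt_nonneg _) 3
          have h3 : lam * Real.sqrt (B z z) ^ 3 ≤ 0 := mul_nonpos_of_nonpos_of_nonneg h hs
          linarith
      have p1 : ∀ u v : V, B u (mul u v) = 0 := by
        intro u v
        have e1 := hz (u + v)
        have e2 := hz (u - v)
        simp only [map_add, map_sub, LinearMap.add_apply, LinearMap.sub_apply] at e1 e2
        have h1 : B u (mul v u) = B u (mul u v) := by rw [hcomm v u]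
        have h2 : B v (mul u u) = B u (mul u v) := by rw [assoc' v u u, hcomm v u]
        have h3 : B u (mul v v) = B v (mul u v) := assoc' u v v
        have h4 : B v (mul v u) = B v (mul u v) := by rw [hcomm v u]
        rw [h1, h2, h3, h4, hz u, hz v] at e1 e2
        linarith
      have p2 : B (mul u₀ v₀) (mul u₀ v₀) = 0 := by
        have e := p1 (u₀ + mul u₀ v₀) v₀
        simp only [map_add, LinearMap.add_apply] at e
        have h1 : B u₀ (mul (mul u₀ v₀) v₀) = B (mul u₀ v₀) (mul u₀ v₀) :=
          assoc' u₀ (mul u₀ v₀) v₀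
        rw [h1] at e
        linarith [e, p1 u₀ v₀, p1 (mul u₀ v₀) v₀]
      exact absurd (nz _ p2) huv
  -- master expansion inequality
  have master : ∀ (t : ℝ) (y : V), B y x = 0 →
      3*t*(B (mul x x) y) + 3*t^2*(B (mul x y) y) + t^3*(B y (mul y y))
        ≤ lam * ((3/2)*(t^2*B y y) + (3/8)*(t^2*B y y)^2) := by
    intro t y hy
    have hyx : B x y = 0 := by rw [hsymm]; exact hy
    have hm : 0 ≤ B y y := by
      rcases eq_or_ne y 0 with rfl | h
      · simp
      · exact (hpos y h).le
    have hBz : B (x + t • y) (x + t • y) = 1 + t^2 * B y y := by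
      simp only [map_add, map_smul, LinearMap.add_apply, LinearMap.smul_apply,
        smul_eq_mul, hx, hy, hyx]
      ring
    have hz0 : x + t • y ≠ 0 := by
      intro h
      have : B (x + t • y) (x + t • y) = 0 := by rw [h]; simp
      rw [hBz] at this
      linarith [mul_nonneg (sq_nonneg t) hm]
    have h := scale (x + t • y) hz0
    rw [hBz] at h
    have hexp : B (x + t • y) (mul (x + t • y) (x + t • y))
        = lam + 3*t*(B (mul x x) y) + 3*t^2*(B (mul x y) y) + t^3*(B y (mul y y)) := by
      simp only [map_add, map_smul, LinearMap.add_apply, LinearMap.smul_apply, smul_eq_mul]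
      have e1 : B x (mul x y) = B (mul x x) y := (hassoc x x y).symm
      have e2 : B x (mul y x) = B (mul x x) y := by rw [hcomm y x, e1]
      have e3 : B x (mul y y) = B (mul x y) y := (hassoc x y y).symm
      have e4 : B y (mul x x) = B (mul x x) y := hsymm _ _
      have e5 : B y (mul x y) = B (mul x y) y := hsymm _ _
      have e6 : B y (mul y x) = B (mul x y) y := by rw [hcomm y x, e5]
      rw [e1, e2, e3, e4, e5, e6, hlam']
      ring
    rw [hexp] at h
    have hsq := sqrt_cube_le (s := t^2 * B y y) (mul_nonneg (sq_nonneg t) hm)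
    have h3 : lam * Real.sqrt (1 + t^2 * B y y) ^ 3
        ≤ lam * (1 + (3/2)*(t^2*B y y) + (3/8)*(t^2*B y y)^2) :=
      mul_le_mul_of_nonneg_left hsq hlam_pos.le
    linarith [h, h3]
  -- first order: B (mul x x) y ≤ 0 for y ⊥ x
  have fo_le : ∀ y : V, B y x = 0 → B (mul x x) y ≤ 0 := by
    intro y hy
    obtain ⟨a, ha⟩ : ∃ a : ℝ, a = B (mul x x) y := ⟨_, rfl⟩
    obtain ⟨b, hb⟩ : ∃ b : ℝ, b = B (mul x y) y := ⟨_, rfl⟩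
    obtain ⟨c3, hc3⟩ : ∃ c3 : ℝ, c3 = B y (mul y y) := ⟨_, rfl⟩
    obtain ⟨m, hmm⟩ : ∃ m : ℝ, m = B y y := ⟨_, rfl⟩
    have hm : 0 ≤ m := by
      rcases eq_or_ne y 0 with rfl | h
      · simp [hmm]
      · rw [hmm]; exact (hpos y h).le
    rw [← ha]
    apply aux_le_zero (K := ((1/2)*lam*m + (1/8)*lam*m^2 + |b| + (1/3)*|c3|))
    intro t ht ht1
    have hM := master t y hy
    rw [← ha, ← hb, ← hc3, ← hmm] at hM
    have ht2 : t^3 ≤ t^2 := by nlinarith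
    have ht4 : t^4 ≤ t^2 := by nlinarith
    have A1 : lam * ((3/2)*(t^2*m) + (3/8)*(t^2*m)^2)
        ≤ (3/2)*lam*m*t^2 + (3/8)*lam*m^2*t^2 := by
      have h0 : (0:ℝ) ≤ (3/8)*lam*m^2 :=
        mul_nonneg (by linarith : (0:ℝ) ≤ (3/8)*lam) (sq_nonneg m)
      have := mul_le_mul_of_nonneg_left ht4 h0
      linarith [this]
    have A2 : 3*t^2*(-b) ≤ 3*t^2*|b| :=
      mul_le_mul_of_nonneg_left (neg_le_abs b) (by positivity)
    have A3 : t^3*(-c3) ≤ t^2*|c3| := by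
      calc t^3*(-c3) ≤ t^3*|c3| :=
            mul_le_mul_of_nonneg_left (neg_le_abs c3) (pow_nonneg ht.le 3)
        _ ≤ t^2*|c3| := mul_le_mul_of_nonneg_right ht2 (abs_nonneg c3)
    have key : 3*t*a ≤ t^2 * (3*((1/2)*lam*m + (1/8)*lam*m^2 + |b| + (1/3)*|c3|)) := by
      linarith [hM, A1, A2, A3]
    have h3t : (0:ℝ) < 3*t := by linarith
    rw [show t^2 * (3*((1/2)*lam*m + (1/8)*lam*m^2 + |b| + (1/3)*|c3|))
        = 3*t*(t*((1/2)*lam*m + (1/8)*lam*m^2 + |b| + (1/3)*|c3|)) from by ring] at key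
    exact le_of_mul_le_mul_left key h3t
  have fo : ∀ y : V, B y x = 0 → B (mul x x) y = 0 := by
    intro y hy
    have h1 := fo_le y hy
    have h2 := fo_le (-y) (by rw [map_neg, LinearMap.neg_apply, hy, neg_zero])
    rw [map_neg] at h2
    simp only [neg_nonpos] at h2
    -- h2 : 0 ≤ B (mul x x) y ?  (B (mul x x) (-y) = - B (mul x x) y)
    linarith
  -- idempotency : mul x x = lam • x
  have hxsq : mul x x = lam • x := by
    set w := mul x x - lam • x with hw
    have hwx : B w x = 0 := by
      simp only [hw, map_sub, map_smul, LinearMap.sub_apply, LinearMap.smul_apply,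
        smul_eq_mul]
      rw [← hlam, hx]; ring
    have h1 : B (mul x x) w = 0 := fo w hwx
    have h2 : B w w = 0 := by
      have h1' := h1
      simp only [hw, map_sub, map_smul, smul_eq_mul] at h1'
      simp only [hw, map_sub, map_smul, LinearMap.sub_apply, LinearMap.smul_apply,
        smul_eq_mul]
      rw [hlam', ← hlam, hx]
      rw [← hlam] at h1'
      linarith [h1']
    have := nz w h2
    rw [hw, sub_eq_zero] at this
    exact this
  -- second order
  have so : ∀ y : V, B y x = 0 → B (mul x y) y ≤ lam/2 * B y y := by
    intro y hy
    obtain ⟨b, hb⟩ : ∃ b : ℝ, b = B (mul x y) y := ⟨_, rfl⟩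
    obtain ⟨c3, hc3⟩ : ∃ c3 : ℝ, c3 = B y (mul y y) := ⟨_, rfl⟩
    obtain ⟨m, hmm⟩ : ∃ m : ℝ, m = B y y := ⟨_, rfl⟩
    have ha : B (mul x x) y = 0 := fo y hy
    have hm : 0 ≤ m := by
      rcases eq_or_ne y 0 with rfl | h
      · simp [hmm]
      · rw [hmm]; exact (hpos y h).le
    rw [← hb, ← hmm]
    have key : 3*b - (3/2)*lam*m ≤ 0 := by
      apply aux_le_zero (K := (3/8)*lam*m^2 + |c3|)
      intro t ht ht1
      have hM := master t y hy
      rw [ha, ← hb, ← hc3, ← hmm] at hM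
      have ht3 : t^4 ≤ t^3 := by
        nlinarith [mul_nonneg (pow_pos ht 3).le (sub_nonneg.2 ht1)]
      have ht2 : (0:ℝ) < t^2 := pow_pos ht 2
      have A1 : lam * ((3/2)*(t^2*m) + (3/8)*(t^2*m)^2)
          ≤ (3/2)*lam*m*t^2 + (3/8)*lam*m^2*t^3 := by
        have h0 : (0:ℝ) ≤ (3/8)*lam*m^2 :=
          mul_nonneg (by linarith : (0:ℝ) ≤ (3/8)*lam) (sq_nonneg m)
        have := mul_le_mul_of_nonneg_left ht3 h0
        linarith [this]
      have A3 : t^3*(-c3) ≤ t^3*|c3| :=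
        mul_le_mul_of_nonneg_left (neg_le_abs c3) (pow_nonneg ht.le 3)
      have key2 : t^2*(3*b - (3/2)*lam*m) ≤ t^2*(t*((3/8)*lam*m^2 + |c3|)) := by
        linarith [hM, A1, A3]
      exact le_of_mul_le_mul_left key2 ht2
    linarith
  -- assemble
  have hlam_ne : lam ≠ 0 := hlam_pos.ne'
  have hx0 : x ≠ 0 := by
    intro h
    rw [h] at hx; simp at hx
  refine ⟨?_, ?_, ?_⟩
  · rw [hc]
    simp only [map_smul, LinearMap.smul_apply]
    rw [hxsq]
    rw [smul_smul, smul_smul]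
    congr 1
    field_simp
  · rw [hc]
    exact smul_ne_zero (inv_ne_zero hlam_ne) hx0
  · intro y hyc
    have hyx : B y x = 0 := by
      rw [hc, map_smul, smul_eq_mul] at hyc
      rcases mul_eq_zero.mp hyc with h | h
      · exact absurd h (inv_ne_zero hlam_ne)
      · exact h
    have h1 := so y hyx
    rw [hc]
    simp only [map_smul, LinearMap.smul_apply, smul_eq_mul]
    have hinv : 0 < lam⁻¹ := inv_pos.2 hlam_pos
    calc lam⁻¹ * B (mul x y) y ≤ lam⁻¹ * (lam/2 * B y y) :=
          mul_le_mul_of_nonneg_left h1 hinv.le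
      _ = (1/2) * B y y := by field_simp
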